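/- Suppose R > 1 and let S ∈ (1, R]. Then there exists a flow φ : Γ_S → [0,∞) such that (a) Σ_{γ∈Γ_S(x,x')} φ(γ) = π(x)·π(x') for all x ≠ x', and (b) for all x ≠ x' and every edge (z,z') ∈ E_S with z' ∈ N_S(z), Σ over γ ∈ Γ_S(x,x') containing the edge (z,z') of φ(γ) is at most (P(z,z')/P(z, N_S(z)))·π(x)·π(x'), where P(z, N_S(z)) = Σ_{z''∈N_S(z)} P(z,z''). -/

import Mathlib

open Finset

noncomputable section

variable {X : Type*}

/-- Total variation distance between two (finitely supported) distributions. -/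
def tvDist [Fintype X] (ζ μ : X → ℝ) : ℝ :=
  ⨆ A : Finset X, |∑ a ∈ A, ζ a - ∑ a ∈ A, μ a|

/-- The lazy version `(P + I)/2` of a transition matrix. -/
def lazyM [Fintype X] [DecidableEq X] (P : Matrix X X ℝ) : Matrix X X ℝ :=
  (2 : ℝ)⁻¹ • (P + 1)

/-- Mixing time started from `x`. -/
def mixTimeFrom [Fintype X] [DecidableEq X] (P : Matrix X X ℝ) (μ : X → ℝ) (ε : ℝ) (x : X) : ℕ :=
  sInf {t : ℕ | tvDist (fun y => (P ^ t) x y) μ ≤ ε}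

/-- Worst-case mixing time. -/
def mixTime [Fintype X] [DecidableEq X] (P : Matrix X X ℝ) (μ : X → ℝ) (ε : ℝ) : ℕ :=
  Finset.univ.sup (mixTimeFrom P μ ε)

/-- Variational spectral gap of a reversible transition matrix. -/
def specGap [Fintype X] (P : Matrix X X ℝ) (μ : X → ℝ) : ℝ :=
  sInf { r : ℝ | ∃ f : X → ℝ,
    (2⁻¹ * ∑ x, ∑ y, (f x - f y) ^ 2 * μ x * μ y) ≠ 0 ∧
    r = (2⁻¹ * ∑ x, ∑ y, (f x - f y) ^ 2 * P x y * μ x) /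
        (2⁻¹ * ∑ x, ∑ y, (f x - f y) ^ 2 * μ x * μ y) }

/-- Restricted spectral gap on `X0`. -/
def restGap [Fintype X] (P : Matrix X X ℝ) (μ : X → ℝ) (X0 : Finset X) : ℝ :=
  sInf { r : ℝ | ∃ f : X → ℝ,
    0 < (∑ x ∈ X0, ∑ y ∈ X0, (f x - f y) ^ 2 * μ x * μ y) ∧
    r = (∑ x ∈ X0, ∑ y ∈ X0, (f x - f y) ^ 2 * P x y * μ x) /
        (∑ x ∈ X0, ∑ y ∈ X0, (f x - f y) ^ 2 * μ x * μ y) }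

/-- `c(ρ) = 4 / (1 - ρ^{-1/2})³`. -/
def cFun (ρ : ℝ) : ℝ := 4 / (1 - ρ ^ (-(2 : ℝ)⁻¹)) ^ 3

/-- Maximum neighborhood size. -/
def Mmax [Fintype X] (N : X → Finset X) : ℕ := Finset.univ.sup fun x => (N x).card

/-- Minimal value of `π`. -/
def piMin [Fintype X] [Nonempty X] (π : X → ℝ) : ℝ := ⨅ x, π x

/-- `R = min_{x ≠ x*} max_{y ∈ N(x)} π(y)/π(x)`. -/
def Rval [Fintype X] (π : X → ℝ) (N : X → Finset X) (xstar : X) : ℝ :=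
  sInf ((fun x => sSup ((fun y => π y / π x) '' (N x : Set X))) '' {x | x ≠ xstar})

/-- Restricted `R|_{X₀}`. -/
def RvalRes [Fintype X] [DecidableEq X] (π : X → ℝ) (N : X → Finset X) (X0 : Finset X)
    (x0star : X) : ℝ :=
  sInf ((fun x => sSup ((fun y => π y / π x) '' ((N x ∩ X0 : Finset X) : Set X))) ''
    {x | x ∈ X0 ∧ x ≠ x0star})

/-- Random walk Metropolis–Hastings transition matrix. -/
def rwMH [Fintype X] [DecidableEq X] (π : X → ℝ) (N : X → Finset X) : Matrix X X ℝ :=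
  Matrix.of fun x y =>
    if y ∈ N x then min (((N x).card : ℝ))⁻¹ (π y / (π x * ((N y).card : ℝ)))
    else if y = x then
      1 - ∑ z ∈ N x, min (((N x).card : ℝ))⁻¹ (π z / (π x * ((N z).card : ℝ)))
    else 0

/-- The clipping function `clip(u, ℓ, L)`. -/
def clip (l L u : ℝ) : ℝ := if u < l then l else if u ≤ L then u else L

/-- Normalizing constant of the informed proposal. -/
def Zh [Fintype X] (π : X → ℝ) (N : X → Finset X) (l L : ℝ) (x : X) : ℝ :=
  ∑ y ∈ N x, clip l L (π y / π x)

/-- Informed proposal kernel. -/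
def Kh [Fintype X] [DecidableEq X] (π : X → ℝ) (N : X → Finset X) (l L : ℝ) (x y : X) : ℝ :=
  (if y ∈ N x then clip l L (π y / π x) else 0) / Zh π N l L x

/-- Informed Metropolis–Hastings transition matrix. -/
def infMH [Fintype X] [DecidableEq X] (π : X → ℝ) (N : X → Finset X) (l L : ℝ) :
    Matrix X X ℝ :=
  Matrix.of fun x y =>
    if y = x then
      1 - ∑ z ∈ Finset.univ.erase x,
        Kh π N l L x z * min 1 ((π z * Kh π N l L z x) / (π x * Kh π N l L x z))
    else Kh π N l L x y * min 1 ((π y * Kh π N l L y x) / (π x * Kh π N l L x y))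

/-- List of consecutive edges of a list of vertices. -/
def edgeList : List X → List (X × X)
  | a :: b :: rest => (a, b) :: edgeList (b :: rest)
  | _ => []

/-- `γ` is a path from `x` to `y` (x ≠ y) with all edges in `E` and no repeated edge. -/
def IsPathIn (E : Finset (X × X)) (x y : X) (γ : List X) : Prop :=
  x ≠ y ∧ γ.head? = some x ∧ γ.getLast? = some y ∧
    (∀ e ∈ edgeList γ, e ∈ E) ∧ (edgeList γ).Nodup

/-- `Φ(x,y) = Σ_{γ ∈ Γ_E(x,y)} φ(γ)`. -/
def flowBetween (E : Finset (X × X)) (φ : List X → ℝ) (x y : X) : ℝ :=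
  ∑' γ : {γ : List X // IsPathIn E x y γ}, φ γ

/-- Flow from `x` to `y` through the edge `e`. -/
def flowBetweenThrough (E : Finset (X × X)) (φ : List X → ℝ) (x y : X) (e : X × X) : ℝ :=
  ∑' γ : {γ : List X // IsPathIn E x y γ ∧ e ∈ edgeList γ}, φ γ

/-- `w`-length of a path. -/
def wlen (w : X × X → ℝ) (γ : List X) : ℝ := ((edgeList γ).map w).sum

/-- Congestion `A(E, w, φ)`. -/
def congestion [Fintype X] (π : X → ℝ) (P : Matrix X X ℝ) (E : Finset (X × X))
    (w : X × X → ℝ) (φ : List X → ℝ) : ℝ :=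
  ⨆ e ∈ E,
    (∑' γ : {γ : List X // (∃ x y, IsPathIn E x y γ) ∧ e ∈ edgeList γ}, wlen w γ * φ γ) /
      (π e.1 * P e.1 e.2 * w e)

/-- `N_S(x) = {x' ∈ N(x) : π(x')/π(x) ≥ S}`. -/
def NS [Fintype X] (π : X → ℝ) (N : X → Finset X) (S : ℝ) (x : X) : Finset X :=
  (N x).filter fun y => S ≤ π y / π x

/-- Edge set `E_S`. -/
def ES [Fintype X] [DecidableEq X] (π : X → ℝ) (N : X → Finset X) (S : ℝ) : Finset (X × X) :=
  Finset.univ.filter fun e => e.1 ∈ NS π N S e.2 ∨ e.2 ∈ NS π N S e.1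

/-- Restricted `N|^S_{X₀}(x)`. -/
def NSres [Fintype X] [DecidableEq X] (π : X → ℝ) (N : X → Finset X) (X0 : Finset X) (S : ℝ)
    (x : X) : Finset X :=
  ((N x) ∩ X0).filter fun y => S ≤ π y / π x

/-- Restricted edge set `E_S⁰`. -/
def ESres [Fintype X] [DecidableEq X] (π : X → ℝ) (N : X → Finset X) (X0 : Finset X)
    (S : ℝ) : Finset (X × X) :=
  Finset.univ.filter fun e =>
    (e.1 ∈ X0 ∧ e.2 ∈ X0) ∧ (e.1 ∈ NSres π N X0 S e.2 ∨ e.2 ∈ NSres π N X0 S e.1)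

end

noncomputable section

variable {X : Type*} [Fintype X] [DecidableEq X]


def listsUpTo (X : Type*) [Fintype X] [DecidableEq X] : ℕ → Finset (List X)
  | 0 => {[]}
  | n+1 => {[]} ∪ Finset.image₂ List.cons Finset.univ (listsUpTo X n)

lemma mem_listsUpTo {n : ℕ} {γ : List X} : γ ∈ listsUpTo X n ↔ γ.length ≤ n := by
  induction n generalizing γ with
  | zero => simp [listsUpTo, List.length_eq_zero_iff]
  | succ n ih =>
    cases γ with
    | nil => simp [listsUpTo]
    | cons a t =>
      simp only [listsUpTo, Finset.mem_union, Finset.mem_singleton, Finset.mem_image₂,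
        Finset.mem_univ, true_and, List.length_cons]
      constructor
      · rintro (h | ⟨b, s, hs, h⟩)
        · simp at h
        · obtain ⟨rfl, rfl⟩ := List.cons.injEq b s a t ▸ h
          have := ih.1 hs; omega
      · intro h
        exact Or.inr ⟨a, t, ih.2 (by omega), rfl⟩

@[simp] lemma edgeList_nil : edgeList ([] : List X) = [] := rfl
@[simp] lemma edgeList_single (a : X) : edgeList [a] = [] := rfl
@[simp] lemma edgeList_cons₂ (a b : X) (t : List X) :
    edgeList (a :: b :: t) = (a, b) :: edgeList (b :: t) := rfl

lemma mem_fst_of_mem_edgeList {e : X × X} : ∀ {γ : List X}, e ∈ edgeList γ → e.1 ∈ γ ∧ e.2 ∈ γ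
  | [], h => by simp at h
  | [a], h => by simp at h
  | a :: b :: t, h => by
    rcases List.mem_cons.1 h with h | h
    · subst h; simp
    · have := mem_fst_of_mem_edgeList h
      exact ⟨List.mem_cons_of_mem _ this.1, List.mem_cons_of_mem _ this.2⟩

lemma edgeList_append (c : X) : ∀ (α : List X), α.getLast? = some c →
    ∀ l : List X, edgeList (α ++ l) = edgeList α ++ edgeList (c :: l)
  | [], h, l => by simp at h
  | [a], h, l => by simp at h; subst h; simp
  | a :: b :: t, h, l => by
    have h' : (b :: t).getLast? = some c := by
      simpa [List.getLast?_cons_cons] using h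
    have := edgeList_append c (b :: t) h' l
    simp only [List.cons_append, edgeList_cons₂]
    rw [show b :: (t ++ l) = (b :: t) ++ l from rfl, this]

lemma edgeList_reverse : ∀ (γ : List X),
    edgeList γ.reverse = ((edgeList γ).reverse).map Prod.swap
  | [] => by simp
  | [a] => by simp
  | a :: b :: t => by
    have ih := edgeList_reverse (b :: t)
    have hb : (b :: t).reverse.getLast? = some b := by
      rw [List.getLast?_reverse]; rfl
    have hne : (b :: t).reverse ≠ [] := by simp
    calc edgeList ((a :: b :: t)).reverse
        = edgeList ((b :: t).reverse ++ [a]) := by simp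
      _ = edgeList (b :: t).reverse ++ edgeList [b, a] := edgeList_append b _ hb [a]
      _ = ((edgeList (b :: t)).reverse).map Prod.swap ++ [(b, a)] := by rw [ih]; rfl
      _ = ((edgeList (a :: b :: t)).reverse).map Prod.swap := by simp

lemma chain'_of_edgeList {R : X → X → Prop} : ∀ {γ : List X},
    (∀ e ∈ edgeList γ, R e.1 e.2) → List.Chain' R γ
  | [], _ => List.isChain_nil
  | [a], _ => List.isChain_singleton a
  | a :: b :: t, h => by
    rw [List.Chain', List.isChain_cons_cons]
    exact ⟨h (a, b) (by simp), chain'_of_edgeList (fun e he => h e (by simp [he]))⟩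

lemma nodup_edgeList : ∀ {γ : List X}, γ.Nodup → (edgeList γ).Nodup
  | [], _ => by simp
  | [a], _ => by simp
  | a :: b :: t, h => by
    simp only [edgeList_cons₂, List.nodup_cons]
    refine ⟨fun hmem => ?_, nodup_edgeList (List.nodup_cons.1 h).2⟩
    · exact (List.nodup_cons.1 h).1 (mem_fst_of_mem_edgeList hmem).1

lemma nodup_of_pi_mono (π : X → ℝ) {γ : List X}
    (h : ∀ e ∈ edgeList γ, π e.1 < π e.2) : γ.Nodup := by
  have hc : List.Chain' (fun a b => π a < π b) γ := chain'_of_edgeList h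
  have : IsTrans X (fun a b : X => π a < π b) := ⟨fun _ _ _ => lt_trans⟩
  have hp := List.isChain_iff_pairwise.1 hc
  exact hp.imp (fun {a b} hab => fun hEq => absurd (hEq ▸ hab) (lt_irrefl _))


noncomputable def ascAux (π : X → ℝ) (N : X → Finset X) (S : ℝ) (P : Matrix X X ℝ)
    (xstar : X) : ℕ → X → List X → ℝ
  | 0, x, γ => if x = xstar ∧ γ = [x] then 1 else 0
  | n+1, x, γ =>
    if x = xstar then (if γ = [x] then 1 else 0)
    else match γ with
      | [] => 0
      | a :: rest => if a = x then ∑ z ∈ NS π N S x,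
          (P x z / ∑ u ∈ NS π N S x, P x u) * ascAux π N S P xstar n z rest else 0

section Asc
variable (π : X → ℝ) (N : X → Finset X) (S : ℝ) (P : Matrix X X ℝ) (xstar : X)

lemma ascAux_nonneg (hPnn : ∀ x y, 0 ≤ P x y) :
    ∀ (n : ℕ) (x : X) (γ : List X), 0 ≤ ascAux π N S P xstar n x γ
  | 0, x, γ => by unfold ascAux; split <;> norm_num
  | n+1, x, γ => by
    unfold ascAux
    split
    · split <;> norm_num
    · match γ with
      | [] => simp
      | a :: rest =>
        simp only
        split
        · exact Finset.sum_nonneg fun z _ => mul_nonneg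
            (div_nonneg (hPnn _ _) (Finset.sum_nonneg fun u _ => hPnn _ _))
            (ascAux_nonneg hPnn n z rest)
        · exact le_refl 0

lemma ascAux_xstar (n : ℕ) (γ : List X) (h : ascAux π N S P xstar n xstar γ ≠ 0) :
    γ = [xstar] := by
  cases n with
  | zero => unfold ascAux at h; revert h; split <;> simp_all
  | succ n => unfold ascAux at h; revert h; split <;> simp_all

lemma ascAux_succ_nil (n : ℕ) (x : X) :
    ascAux π N S P xstar (n+1) x [] = 0 := by
  unfold ascAux
  split
  · simp
  · rfl

lemma ascAux_succ_cons (n : ℕ) (x a : X) (rest : List X) (hx : x ≠ xstar) :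
    ascAux π N S P xstar (n+1) x (a :: rest) =
      if a = x then ∑ z ∈ NS π N S x,
        (P x z / ∑ u ∈ NS π N S x, P x u) * ascAux π N S P xstar n z rest else 0 := by
  conv_lhs => rw [ascAux]
  rw [if_neg hx]

lemma ascAux_support (hstep : ∀ a b, b ∈ NS π N S a → π a < π b) :
    ∀ (n : ℕ) (x : X) (γ : List X), ascAux π N S P xstar n x γ ≠ 0 →
      γ.head? = some x ∧ γ.getLast? = some xstar ∧ γ.length ≤ n + 1 ∧
      (∀ e ∈ edgeList γ, e.2 ∈ NS π N S e.1) ∧ (∀ v ∈ γ, π x ≤ π v) := by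
  intro n
  induction n with
  | zero =>
    intro x γ h
    unfold ascAux at h
    by_cases hc : x = xstar ∧ γ = [x]
    · obtain ⟨rfl, rfl⟩ := hc
      exact ⟨rfl, rfl, by simp, by simp [edgeList], by simp⟩
    · rw [if_neg hc] at h; exact absurd rfl h
  | succ n ih =>
    intro x γ h
    by_cases hx : x = xstar
    · rw [hx] at h
      have hγ := ascAux_xstar π N S P xstar (n+1) γ h
      subst hγ
      exact ⟨by simp [hx], rfl, by simp, by simp [edgeList], by simp [hx]⟩
    · match γ, h with
      | [], h => rw [ascAux_succ_nil] at h; exact absurd rfl h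
      | a :: rest, h =>
        rw [ascAux_succ_cons π N S P xstar n x a rest hx] at h
        by_cases ha : a = x
        · subst ha
          rw [if_pos rfl] at h
          obtain ⟨z, hz, hzne⟩ := Finset.exists_ne_zero_of_sum_ne_zero h
          have hA : ascAux π N S P xstar n z rest ≠ 0 := fun h0 => hzne (by rw [h0, mul_zero])
          obtain ⟨h1, h2, h3, h4, h5⟩ := ih z rest hA
          match rest, h1 with
          | b :: rest', h1 =>
            have hb : b = z := by simpa using h1
            subst hb
            refine ⟨rfl, ?_, ?_, ?_, ?_⟩
            · rw [List.getLast?_cons_cons]; exact h2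
            · simp only [List.length_cons] at h3 ⊢; omega
            · intro e he
              rcases List.mem_cons.1 he with rfl | he'
              · exact hz
              · exact h4 e he'
            · intro v hv
              rcases List.mem_cons.1 hv with rfl | hv'
              · exact le_refl _
              · exact le_trans (le_of_lt (hstep _ _ hz)) (h5 v hv')
        · rw [if_neg ha] at h; exact absurd rfl h

noncomputable def hgt (π : X → ℝ) (x : X) : ℕ := (Finset.univ.filter fun y => π x < π y).card

lemma hgt_lt (hstep : ∀ a b, b ∈ NS π N S a → π a < π b) {x z : X}
    (hz : z ∈ NS π N S x) : hgt π z < hgt π x := by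
  apply Finset.card_lt_card
  constructor
  · intro y hy
    simp only [Finset.mem_filter, Finset.mem_univ, true_and] at hy ⊢
    exact lt_trans (hstep _ _ hz) hy
  · intro hsub
    have hzz := hsub (Finset.mem_filter.2 ⟨Finset.mem_univ z, hstep _ _ hz⟩)
    exact absurd (Finset.mem_filter.1 hzz).2 (lt_irrefl _)

lemma sum_via_cons (n : ℕ) (x : X) (G : List X → ℝ)
    (h0 : ∀ γ ∈ listsUpTo X (n+2), γ ∉ (listsUpTo X (n+1)).image (List.cons x) → G γ = 0) :
    ∑ γ ∈ listsUpTo X (n+2), G γ = ∑ rest ∈ listsUpTo X (n+1), G (x :: rest) := by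
  have hinj : ∀ a ∈ listsUpTo X (n+1), ∀ b ∈ listsUpTo X (n+1),
      x :: a = x :: b → a = b := fun a _ b _ h => by simpa using h
  rw [show (∑ rest ∈ listsUpTo X (n+1), G (x :: rest))
      = ∑ γ ∈ (listsUpTo X (n+1)).image (List.cons x), G γ from
    (Finset.sum_image hinj).symm]
  exact (Finset.sum_subset
    (fun γ hγ => by
      obtain ⟨rest, hrest, rfl⟩ := Finset.mem_image.1 hγ
      exact mem_listsUpTo.2 (by simpa using Nat.add_le_add_right (mem_listsUpTo.1 hrest) 1))
    h0).symm

lemma ascAux_xstar_eq (n : ℕ) (γ : List X) :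
    ascAux π N S P xstar n xstar γ = if γ = [xstar] then 1 else 0 := by
  cases n with
  | zero => unfold ascAux; simp
  | succ n => unfold ascAux; simp

lemma ascAux_mass (hstep : ∀ a b, b ∈ NS π N S a → π a < π b)
    (hNS : ∀ x, x ≠ xstar → (NS π N S x).Nonempty)
    (hPNS : ∀ x, x ≠ xstar → 0 < ∑ u ∈ NS π N S x, P x u) :
    ∀ (n : ℕ) (x : X), hgt π x ≤ n →
      ∑ γ ∈ listsUpTo X (n+1), ascAux π N S P xstar n x γ = 1 := by
  intro n
  induction n with
  | zero =>
    intro x hx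
    by_cases hxs : x = xstar
    · subst hxs
      simp only [ascAux_xstar_eq]
      rw [Finset.sum_ite_eq' _ _ (fun _ => (1:ℝ)), if_pos (mem_listsUpTo.2 (by simp))]
    · obtain ⟨z, hz⟩ := hNS x hxs
      have : z ∈ Finset.univ.filter fun y => π x < π y :=
        Finset.mem_filter.2 ⟨Finset.mem_univ z, hstep _ _ hz⟩
      have := Finset.card_pos.2 ⟨z, this⟩
      unfold hgt at hx; omega
  | succ n ih =>
    intro x hx
    by_cases hxs : x = xstar
    · subst hxs
      simp only [ascAux_xstar_eq]
      rw [Finset.sum_ite_eq' _ _ (fun _ => (1:ℝ)), if_pos (mem_listsUpTo.2 (by simp))]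
    · rw [sum_via_cons n x _ (fun γ hγ hni => by
        by_contra hne
        obtain ⟨h1, _, h3, _, _⟩ := ascAux_support π N S P xstar hstep (n+1) x γ hne
        match γ, h1 with
        | a :: rest, h1 =>
          have ha : a = x := by simpa using h1
          subst ha
          exact hni (Finset.mem_image.2 ⟨rest, mem_listsUpTo.2
            (by simp only [List.length_cons] at h3; omega), rfl⟩))]
      have hstep2 : ∀ rest ∈ listsUpTo X (n+1),
          ascAux π N S P xstar (n+1) x (x :: rest) =
          ∑ z ∈ NS π N S x, (P x z / ∑ u ∈ NS π N S x, P x u) * ascAux π N S P xstar n z rest :=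
        fun rest _ => by rw [ascAux_succ_cons π N S P xstar n x x rest hxs, if_pos rfl]
      rw [Finset.sum_congr rfl hstep2, Finset.sum_comm]
      have : ∀ z ∈ NS π N S x,
          ∑ rest ∈ listsUpTo X (n+1), (P x z / ∑ u ∈ NS π N S x, P x u) * ascAux π N S P xstar n z rest
          = (P x z / ∑ u ∈ NS π N S x, P x u) := fun z hz => by
        rw [← Finset.mul_sum, ih z (by have := hgt_lt π N S hstep hz; omega), mul_one]
      rw [Finset.sum_congr rfl this, ← Finset.sum_div]
      exact div_self (ne_of_gt (hPNS x hxs))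

lemma ascAux_edge_zero (hstep : ∀ a b, b ∈ NS π N S a → π a < π b)
    {z z' x : X} (hlt : π z < π x) (n : ℕ) (γ : List X) :
    (if (z, z') ∈ edgeList γ then ascAux π N S P xstar n x γ else 0) = 0 := by
  split
  · by_contra hA
    obtain ⟨_, _, _, _, h5⟩ := ascAux_support π N S P xstar hstep n x γ hA
    have hz : z ∈ γ := (mem_fst_of_mem_edgeList (by assumption)).1
    exact absurd (h5 z hz) (not_le.2 hlt)
  · rfl

lemma ascAux_usage (hstep : ∀ a b, b ∈ NS π N S a → π a < π b)
    (hNS : ∀ x, x ≠ xstar → (NS π N S x).Nonempty)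
    (hPnn : ∀ x y, 0 ≤ P x y)
    (hPNS : ∀ x, x ≠ xstar → 0 < ∑ u ∈ NS π N S x, P x u)
    (z z' : X) (hz' : z' ∈ NS π N S z) :
    ∀ (n : ℕ) (x : X), hgt π x ≤ n →
      ∑ γ ∈ listsUpTo X (n+1), (if (z, z') ∈ edgeList γ then ascAux π N S P xstar n x γ else 0)
        ≤ P z z' / ∑ u ∈ NS π N S z, P z u := by
  have hQnn : 0 ≤ P z z' / ∑ u ∈ NS π N S z, P z u :=
    div_nonneg (hPnn _ _) (Finset.sum_nonneg fun u _ => hPnn _ _)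
  intro n
  induction n with
  | zero =>
    intro x hx
    by_cases hxs : x = xstar
    · have : ∀ γ ∈ listsUpTo X 1,
          (if (z, z') ∈ edgeList γ then ascAux π N S P xstar 0 x γ else 0) = 0 := by
        intro γ _
        by_cases hA : ascAux π N S P xstar 0 x γ = 0
        · split <;> simp [hA]
        · have hγ : γ = [xstar] := ascAux_xstar π N S P xstar 0 γ (hxs ▸ hA)
          subst hγ
          simp [edgeList]
      rw [Finset.sum_congr rfl this, Finset.sum_const, smul_zero]
      exact hQnn
    · obtain ⟨w, hw⟩ := hNS x hxs
      have : w ∈ Finset.univ.filter fun y => π x < π y :=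
        Finset.mem_filter.2 ⟨Finset.mem_univ w, hstep _ _ hw⟩
      have := Finset.card_pos.2 ⟨w, this⟩
      unfold hgt at hx; omega
  | succ n ih =>
    intro x hx
    by_cases hxs : x = xstar
    · have : ∀ γ ∈ listsUpTo X (n+2),
          (if (z, z') ∈ edgeList γ then ascAux π N S P xstar (n+1) x γ else 0) = 0 := by
        intro γ _
        by_cases hA : ascAux π N S P xstar (n+1) x γ = 0
        · split <;> simp [hA]
        · have hγ : γ = [xstar] := ascAux_xstar π N S P xstar (n+1) γ (hxs ▸ hA)
          subst hγ
          simp [edgeList]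
      rw [Finset.sum_congr rfl this, Finset.sum_const, smul_zero]
      exact hQnn
    · rw [sum_via_cons n x _ (fun γ hγ hni => by
        by_cases hA : ascAux π N S P xstar (n+1) x γ = 0
        · split <;> simp [hA]
        · exfalso
          obtain ⟨h1, _, h3, _, _⟩ := ascAux_support π N S P xstar hstep (n+1) x γ hA
          match γ, h1 with
          | a :: rest, h1 =>
            have ha : a = x := by simpa using h1
            subst ha
            exact hni (Finset.mem_image.2 ⟨rest, mem_listsUpTo.2
              (by simp only [List.length_cons] at h3; omega), rfl⟩))]
      -- rewrite each summand: push the if inside the z-sum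
      have step1 : ∀ rest ∈ listsUpTo X (n+1),
          (if (z, z') ∈ edgeList (x :: rest) then ascAux π N S P xstar (n+1) x (x :: rest) else 0)
          = ∑ w ∈ NS π N S x, (P x w / ∑ u ∈ NS π N S x, P x u) *
              (if (z, z') ∈ edgeList (x :: rest) then ascAux π N S P xstar n w rest else 0) := by
        intro rest _
        rw [ascAux_succ_cons π N S P xstar n x x rest hxs, if_pos rfl]
        split
        · rfl
        · simp
      rw [Finset.sum_congr rfl step1, Finset.sum_comm]
      -- now analyze the inner sums
      have inner : ∀ w ∈ NS π N S x, ∀ rest ∈ listsUpTo X (n+1),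
          (if (z, z') ∈ edgeList (x :: rest) then ascAux π N S P xstar n w rest else 0)
          = (if (x, w) = (z, z') then ascAux π N S P xstar n w rest
             else if (z, z') ∈ edgeList rest then ascAux π N S P xstar n w rest else 0) := by
        intro w _ rest _
        by_cases hA : ascAux π N S P xstar n w rest = 0
        · split <;> [skip; split] <;> simp [hA]
        · obtain ⟨h1, _, _, _, _⟩ := ascAux_support π N S P xstar hstep n w rest hA
          match rest, h1 with
          | b :: rest', h1 =>
            have hb : b = w := by simpa using h1
            rw [hb]
            by_cases he : (x, w) = (z, z')
            · rw [if_pos he, if_pos (by rw [edgeList_cons₂]; exact List.mem_cons.2 (Or.inl he.symm))]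
            · rw [if_neg he]
              by_cases he2 : (z, z') ∈ edgeList (w :: rest')
              · rw [if_pos he2, if_pos (by rw [edgeList_cons₂]; exact List.mem_cons.2 (Or.inr he2))]
              · rw [if_neg he2, if_neg (by
                  rw [edgeList_cons₂]
                  intro hmem
                  rcases List.mem_cons.1 hmem with h | h
                  · exact he h.symm
                  · exact he2 h)]
      by_cases hxz : x = z
      · subst hxz
        rw [Finset.sum_eq_single z'
          (fun w hw hne => Finset.sum_eq_zero (fun rest hrest => by
            rw [inner w hw rest hrest,
              if_neg (fun hc => hne (Prod.ext_iff.1 hc).2),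
              ascAux_edge_zero π N S P xstar hstep (hstep _ _ hw) n rest, mul_zero]))
          (fun hni => absurd hz' hni)]
        rw [Finset.sum_congr rfl (fun rest hrest => by
          rw [inner z' hz' rest hrest, if_pos rfl])]
        rw [← Finset.mul_sum,
          ascAux_mass π N S P xstar hstep hNS hPNS n z'
            (by have := hgt_lt π N S hstep hz'; omega), mul_one]
      · -- x ≠ z : no first-step edge, use induction hypothesis
        have hb : ∀ w ∈ NS π N S x,
            (∑ rest ∈ listsUpTo X (n+1), (P x w / ∑ u ∈ NS π N S x, P x u) *
              (if (z, z') ∈ edgeList (x :: rest) then ascAux π N S P xstar n w rest else 0))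
            ≤ (P x w / ∑ u ∈ NS π N S x, P x u) * (P z z' / ∑ u ∈ NS π N S z, P z u) := by
          intro w hw
          rw [Finset.sum_congr rfl (fun rest hrest => by
            rw [inner w hw rest hrest,
              if_neg (fun hc => hxz (Prod.ext_iff.1 hc).1)])]
          rw [← Finset.mul_sum]
          exact mul_le_mul_of_nonneg_left
            (ih w (by have := hgt_lt π N S hstep hw; omega))
            (div_nonneg (hPnn _ _) (Finset.sum_nonneg fun u _ => hPnn _ _))
        calc ∑ w ∈ NS π N S x, ∑ rest ∈ listsUpTo X (n+1),
              (P x w / ∑ u ∈ NS π N S x, P x u) *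
                (if (z, z') ∈ edgeList (x :: rest) then ascAux π N S P xstar n w rest else 0)
            ≤ ∑ w ∈ NS π N S x, (P x w / ∑ u ∈ NS π N S x, P x u) *
                (P z z' / ∑ u ∈ NS π N S z, P z u) := Finset.sum_le_sum hb
          _ = (∑ w ∈ NS π N S x, P x w / ∑ u ∈ NS π N S x, P x u) *
                (P z z' / ∑ u ∈ NS π N S z, P z u) := by rw [Finset.sum_mul]
          _ = P z z' / ∑ u ∈ NS π N S z, P z u := by
              rw [← Finset.sum_div, div_self (ne_of_gt (hPNS x hxs)), one_mul]

lemma glue_facts (hstep : ∀ a b, b ∈ NS π N S a → π a < π b)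
    {x y : X} (hxy : x ≠ y) {α β : List X}
    (hαh : α.head? = some x) (hαl : α.getLast? = some xstar)
    (hαe : ∀ e ∈ edgeList α, e.2 ∈ NS π N S e.1)
    (hβh : β.head? = some y) (hβl : β.getLast? = some xstar)
    (hβe : ∀ e ∈ edgeList β, e.2 ∈ NS π N S e.1) :
    edgeList (α ++ β.reverse.tail) = edgeList α ++ edgeList β.reverse ∧
    IsPathIn (ES π N S) x y (α ++ β.reverse.tail) := by
  have hαne : α ≠ [] := by intro h; rw [h] at hαh; simp at hαh
  have hrevh : β.reverse.head? = some xstar := by rw [List.head?_reverse]; exact hβl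
  obtain ⟨t, hrevt⟩ : ∃ t, β.reverse = xstar :: t := by
    cases hr : β.reverse with
    | nil => rw [hr] at hrevh; simp at hrevh
    | cons a t => rw [hr] at hrevh; simp at hrevh; exact ⟨t, by rw [hrevh]⟩
  have htail : β.reverse.tail = t := by rw [hrevt]; rfl
  have hedge : edgeList (α ++ β.reverse.tail) = edgeList α ++ edgeList β.reverse := by
    rw [htail, edgeList_append xstar α hαl t, ← hrevt]
  -- descending edges of the reversed list
  have hdesc : ∀ e ∈ edgeList β.reverse, e.1 ∈ NS π N S e.2 ∧ π e.2 < π e.1 := by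
    intro e he
    rw [edgeList_reverse] at he
    obtain ⟨e', he', rfl⟩ := List.mem_map.1 he
    have he'' : e' ∈ edgeList β := List.mem_reverse.1 he'
    exact ⟨hβe e' he'', hstep _ _ (hβe e' he'')⟩
  have hasc : ∀ e ∈ edgeList α, π e.1 < π e.2 := fun e he => hstep _ _ (hαe e he)
  refine ⟨hedge, hxy, ?_, ?_, ?_, ?_⟩
  · -- head
    cases α with
    | nil => exact absurd rfl hαne
    | cons a s => simpa using hαh
  · -- last
    cases t with
    | nil =>
      have hβ : β = [xstar] := by
        have := hrevt
        rw [show β = β.reverse.reverse from (List.reverse_reverse β).symm, this]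
        rfl
      rw [hβ] at hβh
      simp only [List.head?_cons, Option.some.injEq] at hβh
      rw [htail, List.append_nil, hαl, hβh]
    | cons c t' =>
      rw [htail, List.getLast?_append_of_ne_nil _ (by simp)]
      have : (c :: t').getLast? = (xstar :: c :: t').getLast? := by
        rw [List.getLast?_cons_cons]
      rw [this, ← hrevt, List.getLast?_reverse, hβh]
  · -- edges in ES
    intro e he
    rw [hedge] at he
    rcases List.mem_append.1 he with h | h
    · exact Finset.mem_filter.2 ⟨Finset.mem_univ e, Or.inr (hαe e h)⟩
    · exact Finset.mem_filter.2 ⟨Finset.mem_univ e, Or.inl (hdesc e h).1⟩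
  · -- nodup
    rw [hedge]
    refine List.Nodup.append ?_ ?_ ?_
    · exact nodup_edgeList (nodup_of_pi_mono π hasc)
    · exact nodup_edgeList (List.nodup_reverse.2 (nodup_of_pi_mono π
        (fun e he => hstep _ _ (hβe e he))))
    · intro e he1 he2
      exact absurd (hdesc e he2).2 (not_lt.2 (le_of_lt (hasc e he1)))

noncomputable def wpair (π : X → ℝ) (N : X → Finset X) (S : ℝ) (P : Matrix X X ℝ)
    (xstar : X) (n : ℕ) (x y : X) (γ : List X) : ℝ :=
  ∑ α ∈ listsUpTo X (n+1), ∑ β ∈ listsUpTo X (n+1),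
    ascAux π N S P xstar n x α * ascAux π N S P xstar n y β *
      (if γ = α ++ β.reverse.tail then 1 else 0)

noncomputable def flowFn (π : X → ℝ) (N : X → Finset X) (S : ℝ) (P : Matrix X X ℝ)
    (xstar : X) (n : ℕ) (γ : List X) : ℝ :=
  ∑ x : X, ∑ y : X, if x ≠ y then π x * π y * wpair π N S P xstar n x y γ else 0

lemma wpair_nonneg (hPnn : ∀ x y, 0 ≤ P x y) (n : ℕ) (x y : X) (γ : List X) :
    0 ≤ wpair π N S P xstar n x y γ :=
  Finset.sum_nonneg fun α _ => Finset.sum_nonneg fun β _ =>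
    mul_nonneg (mul_nonneg (ascAux_nonneg π N S P xstar hPnn n x α)
      (ascAux_nonneg π N S P xstar hPnn n y β)) (by split <;> norm_num)

lemma flowFn_nonneg (hπpos : ∀ x, 0 < π x) (hPnn : ∀ x y, 0 ≤ P x y) (n : ℕ) (γ : List X) :
    0 ≤ flowFn π N S P xstar n γ :=
  Finset.sum_nonneg fun x _ => Finset.sum_nonneg fun y _ => by
    split
    · exact mul_nonneg (mul_nonneg (le_of_lt (hπpos x)) (le_of_lt (hπpos y)))
        (wpair_nonneg π N S P xstar hPnn n x y γ)
    · exact le_refl 0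

lemma wpair_ne_zero (hstep : ∀ a b, b ∈ NS π N S a → π a < π b) {n : ℕ} {x y : X}
    {γ : List X} (h : wpair π N S P xstar n x y γ ≠ 0) :
    ∃ α β : List X, ascAux π N S P xstar n x α ≠ 0 ∧ ascAux π N S P xstar n y β ≠ 0 ∧
      γ = α ++ β.reverse.tail := by
  obtain ⟨α, hα, h1⟩ := Finset.exists_ne_zero_of_sum_ne_zero h
  obtain ⟨β, hβ, h2⟩ := Finset.exists_ne_zero_of_sum_ne_zero h1
  refine ⟨α, β, ?_, ?_, ?_⟩
  · intro h0; rw [h0] at h2; simp at h2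
  · intro h0; rw [h0] at h2; simp at h2
  · by_contra h0; rw [if_neg h0, mul_zero] at h2; exact h2 rfl

lemma wpair_head_last (hstep : ∀ a b, b ∈ NS π N S a → π a < π b) {n : ℕ} {x y : X}
    (hxy : x ≠ y) {γ : List X} (h : wpair π N S P xstar n x y γ ≠ 0) :
    γ.head? = some x ∧ γ.getLast? = some y ∧ γ.length ≤ 2*n + 2 := by
  obtain ⟨α, β, h1, h2, rfl⟩ := wpair_ne_zero π N S P xstar hstep h
  obtain ⟨hαh, hαl, hαlen, hαe, _⟩ := ascAux_support π N S P xstar hstep n x α h1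
  obtain ⟨hβh, hβl, hβlen, hβe, _⟩ := ascAux_support π N S P xstar hstep n y β h2
  obtain ⟨_, _, hh, hl, _, _⟩ := glue_facts π N S xstar hstep hxy hαh hαl hαe hβh hβl hβe
  refine ⟨hh, hl, ?_⟩
  rw [List.length_append]
  have := List.length_tail (l := β.reverse)
  have := List.length_reverse (as := β)
  omega

lemma flowFn_eq (hstep : ∀ a b, b ∈ NS π N S a → π a < π b) {n : ℕ} {x y : X}
    (hxy : x ≠ y) {γ : List X} (hh : γ.head? = some x) (hl : γ.getLast? = some y) :
    flowFn π N S P xstar n γ = π x * π y * wpair π N S P xstar n x y γ := by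
  unfold flowFn
  rw [Finset.sum_eq_single x (fun x' _ hne => Finset.sum_eq_zero (fun y' _ => by
      by_cases hxy' : x' ≠ y'
      · rw [if_pos hxy']
        rcases eq_or_ne (wpair π N S P xstar n x' y' γ) 0 with h0 | h0
        · rw [h0, mul_zero]
        · obtain ⟨hh', _, _⟩ := wpair_head_last π N S P xstar hstep hxy' h0
          rw [hh] at hh'
          exact absurd (Option.some.injEq .. ▸ hh').symm hne
      · rw [if_neg hxy']))
    (fun h => absurd (Finset.mem_univ x) h)]
  rw [Finset.sum_eq_single y (fun y' _ hne => by
      by_cases hxy' : x ≠ y'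
      · rw [if_pos hxy']
        rcases eq_or_ne (wpair π N S P xstar n x y' γ) 0 with h0 | h0
        · rw [h0, mul_zero]
        · obtain ⟨_, hl', _⟩ := wpair_head_last π N S P xstar hstep hxy' h0
          rw [hl] at hl'
          exact absurd (Option.some.injEq .. ▸ hl').symm hne
      · rw [if_neg hxy'])
    (fun h => absurd (Finset.mem_univ y) h)]
  rw [if_pos hxy]

lemma tsum_paths (f : List X → ℝ) (p : List X → Prop) [DecidablePred p]
    (s : Finset (List X)) (h : ∀ γ, f γ ≠ 0 → γ ∈ s) :
    ∑' γ : {γ : List X // p γ}, f ↑γ = ∑ γ ∈ s.filter p, f γ := by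
  rw [show (∑' γ : {γ : List X // p γ}, f ↑γ) = ∑' γ : {γ | p γ}, f ↑γ from rfl,
    _root_.tsum_subtype]
  rw [tsum_eq_sum (s := s.filter p) (f := Set.indicator {γ | p γ} f) (fun γ hγ => by
    by_cases hp : p γ
    · rw [Set.indicator_of_mem (show γ ∈ {γ | p γ} from hp) f]
      by_contra hf
      exact hγ (Finset.mem_filter.2 ⟨h γ hf, hp⟩)
    · exact Set.indicator_of_notMem (show γ ∉ {γ | p γ} from hp) f)]
  exact Finset.sum_congr rfl fun γ hγ =>
    Set.indicator_of_mem (show γ ∈ {γ | p γ} from (Finset.mem_filter.1 hγ).2) f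

lemma flow_eq_main (hstep : ∀ a b, b ∈ NS π N S a → π a < π b)
    (hNS : ∀ v, v ≠ xstar → (NS π N S v).Nonempty)
    (hPnn : ∀ a b, 0 ≤ P a b)
    (hPNS : ∀ v, v ≠ xstar → 0 < ∑ u ∈ NS π N S v, P v u)
    {n : ℕ} (hhgt : ∀ v, hgt π v ≤ n) {x y : X} (hxy : x ≠ y)
    (F : Finset (List X))
    (hF : ∀ γ, γ ∈ F ↔ γ ∈ listsUpTo X (2*n+3) ∧ IsPathIn (ES π N S) x y γ) :
    ∑ γ ∈ F, wpair π N S P xstar n x y γ = 1 := by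
  have key : ∀ α ∈ listsUpTo X (n+1), ∀ β ∈ listsUpTo X (n+1),
      ascAux π N S P xstar n x α * ascAux π N S P xstar n y β *
        (if α ++ β.reverse.tail ∈ F then 1 else 0)
      = ascAux π N S P xstar n x α * ascAux π N S P xstar n y β := by
    intro α _ β _
    rcases eq_or_ne (ascAux π N S P xstar n x α) 0 with h1 | h1
    · rw [h1]; ring
    rcases eq_or_ne (ascAux π N S P xstar n y β) 0 with h2 | h2
    · rw [h2]; ring
    obtain ⟨hαh, hαl, hαlen, hαe, _⟩ := ascAux_support π N S P xstar hstep n x α h1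
    obtain ⟨hβh, hβl, hβlen, hβe, _⟩ := ascAux_support π N S P xstar hstep n y β h2
    obtain ⟨_, hpath⟩ := glue_facts π N S xstar hstep hxy hαh hαl hαe hβh hβl hβe
    have hmem : α ++ β.reverse.tail ∈ F := by
      rw [hF]
      refine ⟨mem_listsUpTo.2 ?_, hpath⟩
      rw [List.length_append]
      have := List.length_tail (l := β.reverse)
      have := List.length_reverse (as := β)
      omega
    rw [if_pos hmem, mul_one]
  calc ∑ γ ∈ F, wpair π N S P xstar n x y γ
      = ∑ α ∈ listsUpTo X (n+1), ∑ β ∈ listsUpTo X (n+1),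
          ascAux π N S P xstar n x α * ascAux π N S P xstar n y β *
            (if α ++ β.reverse.tail ∈ F then 1 else 0) := by
        unfold wpair
        rw [Finset.sum_comm]
        refine Finset.sum_congr rfl fun α _ => ?_
        rw [Finset.sum_comm]
        refine Finset.sum_congr rfl fun β _ => ?_
        rw [← Finset.mul_sum, Finset.sum_ite_eq' F (α ++ β.reverse.tail) (fun _ => (1:ℝ))]
    _ = ∑ α ∈ listsUpTo X (n+1), ∑ β ∈ listsUpTo X (n+1),
          ascAux π N S P xstar n x α * ascAux π N S P xstar n y β :=
        Finset.sum_congr rfl fun α hα => Finset.sum_congr rfl fun β hβ => key α hα β hβ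
    _ = (∑ α ∈ listsUpTo X (n+1), ascAux π N S P xstar n x α) *
          (∑ β ∈ listsUpTo X (n+1), ascAux π N S P xstar n y β) := by
        rw [Finset.sum_mul_sum]
    _ = 1 := by
        rw [ascAux_mass π N S P xstar hstep hNS hPNS n x (hhgt x),
          ascAux_mass π N S P xstar hstep hNS hPNS n y (hhgt y), mul_one]

lemma flow_bound_main (hstep : ∀ a b, b ∈ NS π N S a → π a < π b)
    (hNS : ∀ v, v ≠ xstar → (NS π N S v).Nonempty)
    (hPnn : ∀ a b, 0 ≤ P a b)
    (hPNS : ∀ v, v ≠ xstar → 0 < ∑ u ∈ NS π N S v, P v u)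
    {n : ℕ} (hhgt : ∀ v, hgt π v ≤ n) {x y : X} (hxy : x ≠ y)
    {z z' : X} (hz' : z' ∈ NS π N S z)
    (F : Finset (List X))
    (hF : ∀ γ, γ ∈ F → (z, z') ∈ edgeList γ) :
    ∑ γ ∈ F, wpair π N S P xstar n x y γ ≤ P z z' / ∑ u ∈ NS π N S z, P z u := by
  have key : ∀ α ∈ listsUpTo X (n+1), ∀ β ∈ listsUpTo X (n+1),
      ascAux π N S P xstar n x α * ascAux π N S P xstar n y β *
        (if α ++ β.reverse.tail ∈ F then 1 else 0)
      ≤ (if (z, z') ∈ edgeList α then ascAux π N S P xstar n x α else 0) *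
          ascAux π N S P xstar n y β := by
    intro α _ β _
    have hRnn : 0 ≤ (if (z, z') ∈ edgeList α then ascAux π N S P xstar n x α else 0) *
        ascAux π N S P xstar n y β :=
      mul_nonneg (by split; exacts [ascAux_nonneg π N S P xstar hPnn n x α, le_refl 0])
        (ascAux_nonneg π N S P xstar hPnn n y β)
    by_cases hmem : α ++ β.reverse.tail ∈ F
    · rcases eq_or_ne (ascAux π N S P xstar n x α) 0 with h1 | h1
      · rw [h1]; simpa using hRnn
      rcases eq_or_ne (ascAux π N S P xstar n y β) 0 with h2 | h2
      · rw [h2]; simpa using hRnn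
      obtain ⟨hαh, hαl, _, hαe, _⟩ := ascAux_support π N S P xstar hstep n x α h1
      obtain ⟨hβh, hβl, _, hβe, _⟩ := ascAux_support π N S P xstar hstep n y β h2
      obtain ⟨hedge, _⟩ := glue_facts π N S xstar hstep hxy hαh hαl hαe hβh hβl hβe
      have he : (z, z') ∈ edgeList α := by
        have := hF _ hmem
        rw [hedge] at this
        rcases List.mem_append.1 this with h | h
        · exact h
        · exfalso
          rw [edgeList_reverse] at h
          obtain ⟨e', he', heq⟩ := List.mem_map.1 h
          have he'' : e' ∈ edgeList β := List.mem_reverse.1 he'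
          have h1' : e'.2 ∈ NS π N S e'.1 := hβe e' he''
          have hz2 : e'.2 = z := by simpa using congrArg Prod.fst heq
          have hz1 : e'.1 = z' := by simpa using congrArg Prod.snd heq
          rw [hz1, hz2] at h1'
          exact absurd (hstep _ _ h1') (not_lt.2 (le_of_lt (hstep _ _ hz')))
      rw [if_pos hmem, if_pos he, mul_one]
    · rw [if_neg hmem, mul_zero]
      exact hRnn
  calc ∑ γ ∈ F, wpair π N S P xstar n x y γ
      = ∑ α ∈ listsUpTo X (n+1), ∑ β ∈ listsUpTo X (n+1),
          ascAux π N S P xstar n x α * ascAux π N S P xstar n y β *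
            (if α ++ β.reverse.tail ∈ F then 1 else 0) := by
        unfold wpair
        rw [Finset.sum_comm]
        refine Finset.sum_congr rfl fun α _ => ?_
        rw [Finset.sum_comm]
        refine Finset.sum_congr rfl fun β _ => ?_
        rw [← Finset.mul_sum, Finset.sum_ite_eq' F (α ++ β.reverse.tail) (fun _ => (1:ℝ))]
    _ ≤ ∑ α ∈ listsUpTo X (n+1), ∑ β ∈ listsUpTo X (n+1),
          (if (z, z') ∈ edgeList α then ascAux π N S P xstar n x α else 0) *
            ascAux π N S P xstar n y β :=
        Finset.sum_le_sum fun α hα => Finset.sum_le_sum fun β hβ => key α hα β hβ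
    _ = (∑ α ∈ listsUpTo X (n+1),
          (if (z, z') ∈ edgeList α then ascAux π N S P xstar n x α else 0)) *
          (∑ β ∈ listsUpTo X (n+1), ascAux π N S P xstar n y β) := by
        rw [Finset.sum_mul_sum]
    _ ≤ P z z' / ∑ u ∈ NS π N S z, P z u := by
        rw [ascAux_mass π N S P xstar hstep hNS hPNS n y (hhgt y), mul_one]
        exact ascAux_usage π N S P xstar hstep hNS hPnn hPNS z z' hz' n x (hhgt x)

end Asc

end

theorem stmt10 {X : Type*} [Fintype X] [DecidableEq X]
    (π : X → ℝ) (hπpos : ∀ x, 0 < π x) (hπsum : ∑ x, π x = 1)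
    (N : X → Finset X)
    (hNirr : ∀ x, x ∉ N x)
    (hNsym : ∀ x y, y ∈ N x → x ∈ N y)
    (hNconn : ∀ x y : X, Relation.ReflTransGen (fun a b => b ∈ N a) x y)
    (xstar : X) (hxstar : ∀ x, π x ≤ π xstar)
    (P : Matrix X X ℝ) (hProw : ∀ x, ∑ y, P x y = 1) (hPnn : ∀ x y, 0 ≤ P x y)
    (hsupp : ∀ x y : X, (y ≠ x ∧ 0 < P x y) ↔ y ∈ N x)
    (hR : 1 < Rval π N xstar)
    (S : ℝ) (hS1 : 1 < S) (hSR : S ≤ Rval π N xstar) :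
    ∃ φ : List X → ℝ, (∀ γ, 0 ≤ φ γ) ∧
      (∀ x y : X, x ≠ y → flowBetween (ES π N S) φ x y = π x * π y) ∧
      (∀ x y : X, x ≠ y → ∀ z z' : X, (z, z') ∈ ES π N S → z' ∈ NS π N S z →
        flowBetweenThrough (ES π N S) φ x y (z, z') ≤
          P z z' / (∑ u ∈ NS π N S z, P z u) * (π x * π y)) := by
  classical
  set n := Fintype.card X with hn
  have hstep : ∀ a b, b ∈ NS π N S a → π a < π b := by
    intro a b hb
    obtain ⟨hbN, hSle⟩ := Finset.mem_filter.1 hb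
    exact (one_lt_div (hπpos a)).1 (lt_of_lt_of_le hS1 hSle)
  have hNSne : ∀ v, v ≠ xstar → (NS π N S v).Nonempty := by
    intro v hv
    set D := ((fun y => π y / π v) '' (N v : Set X)) with hD
    have hmem : sSup D ∈
        ((fun x => sSup ((fun y => π y / π x) '' (N x : Set X))) '' {x | x ≠ xstar}) :=
      Set.mem_image_of_mem _ hv
    have hbdd : BddBelow
        ((fun x => sSup ((fun y => π y / π x) '' (N x : Set X))) '' {x | x ≠ xstar}) :=
      (Set.toFinite _).bddBelow
    have hS : S ≤ sSup D := le_trans hSR (csInf_le hbdd hmem)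
    have hDfin : D.Finite := ((N v : Set X).toFinite).image _
    have hDne : D.Nonempty := by
      by_contra h
      rw [Set.not_nonempty_iff_eq_empty] at h
      rw [h, Real.sSup_empty] at hS
      linarith
    obtain ⟨yy, hyyN, hyy⟩ := hDne.csSup_mem hDfin
    exact ⟨yy, Finset.mem_filter.2 ⟨hyyN, by rw [show π yy / π v = sSup D from hyy]; exact hS⟩⟩
  have hPNS : ∀ v, v ≠ xstar → 0 < ∑ u ∈ NS π N S v, P v u := by
    intro v hv
    exact Finset.sum_pos
      (fun u hu => ((hsupp v u).2 (Finset.mem_filter.1 hu).1).2) (hNSne v hv)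
  have hhgt : ∀ v, hgt π v ≤ n := fun v =>
    le_trans (Finset.card_filter_le _ _) (le_of_eq Finset.card_univ)
  have hsupport : ∀ γ, flowFn π N S P xstar n γ ≠ 0 → γ ∈ listsUpTo X (2*n+3) := by
    intro γ h
    obtain ⟨x', _, h1⟩ := Finset.exists_ne_zero_of_sum_ne_zero h
    obtain ⟨y', _, h2⟩ := Finset.exists_ne_zero_of_sum_ne_zero h1
    have hxy' : x' ≠ y' := by
      by_contra hc
      rw [if_neg (show ¬x' ≠ y' from fun hne => hne hc)] at h2
      exact h2 rfl
    rw [if_pos hxy'] at h2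
    have hw : wpair π N S P xstar n x' y' γ ≠ 0 := fun h0 => h2 (by rw [h0, mul_zero])
    have hlen := (wpair_head_last π N S P xstar hstep hxy' hw).2.2
    exact mem_listsUpTo.2 (by omega)
  refine ⟨flowFn π N S P xstar n, flowFn_nonneg π N S P xstar hπpos hPnn n, ?_, ?_⟩
  · intro x y hxy
    unfold flowBetween
    rw [tsum_paths (flowFn π N S P xstar n) (IsPathIn (ES π N S) x y)
      (listsUpTo X (2*n+3)) hsupport]
    rw [Finset.sum_congr rfl (fun γ hγ => by
      obtain ⟨_, hp⟩ := Finset.mem_filter.1 hγ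
      exact flowFn_eq π N S P xstar hstep hxy hp.2.1 hp.2.2.1)]
    rw [← Finset.mul_sum]
    rw [flow_eq_main π N S P xstar hstep hNSne hPnn hPNS hhgt hxy _
      (fun γ => Finset.mem_filter), mul_one]
  · intro x y hxy z z' hES hz'
    unfold flowBetweenThrough
    rw [tsum_paths (flowFn π N S P xstar n)
      (fun γ => IsPathIn (ES π N S) x y γ ∧ (z, z') ∈ edgeList γ)
      (listsUpTo X (2*n+3)) hsupport]
    rw [Finset.sum_congr rfl (fun γ hγ => by
      obtain ⟨_, hp, _⟩ := Finset.mem_filter.1 hγ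
      exact flowFn_eq π N S P xstar hstep hxy hp.2.1 hp.2.2.1)]
    rw [← Finset.mul_sum, mul_comm (P z z' / ∑ u ∈ NS π N S z, P z u) (π x * π y)]
    exact mul_le_mul_of_nonneg_left
      (flow_bound_main π N S P xstar hstep hNSne hPnn hPNS hhgt hxy hz' _
        (fun γ hγ => ((Finset.mem_filter.1 hγ).2).2))
      (mul_nonneg (le_of_lt (hπpos x)) (le_of_lt (hπpos y)))
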